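/- Let Y be a nonempty finite type, π₀ a policy with π₀(y) > 0 for all y, r : Y → ℝ, and β > 0. Define the calibrated reward C(y) := Σ_z π₀(z)·w_r(y,z) and the policy π*(y) := π₀(y)·e^{C(y)/β} / Σ_z π₀(z)·e^{C(z)/β}. Then π* is the unique maximizer over all policies π of the KL-regularized win-rate objective W_r(π ≻ π₀) − β·KL(π‖π₀), where W_r(π ≻ π₀) := Σ_{y,z} w_r(y,z)·π(y)·π₀(z). -/

import Mathlib

/-- Gibbs' inequality (finite version), with equality case. -/
lemma gibbs_aux {Y : Type*} [Fintype Y] (p q : Y → ℝ) (hp : ∀ y, 0 ≤ p y)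
    (hq : ∀ y, 0 < q y) (hps : ∑ y, p y = 1) (hqs : ∑ y, q y = 1) :
    0 ≤ ∑ y, p y * Real.log (p y / q y) ∧
    ((∑ y, p y * Real.log (p y / q y)) = 0 ↔ p = q) := by
  set g : Y → ℝ := fun y => p y * Real.log (p y / q y) - p y + q y with hg
  have hkey : ∀ y, 0 ≤ g y ∧ (g y = 0 ↔ p y = q y) := by
    intro y
    by_cases hpy : p y = 0
    · have hgy : g y = q y := by simp [hg, hpy]
      constructor
      · rw [hgy]; exact (hq y).le
      · rw [hgy]
        constructor
        · intro h; exact absurd h (hq y).ne'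
        · intro h; rw [hpy] at h; exact absurd h.symm (hq y).ne'
    · have hp' : 0 < p y := lt_of_le_of_ne (hp y) (Ne.symm hpy)
      have h3 : p y * (q y / p y) = q y := by field_simp
      have hlogeq : Real.log (p y / q y) = - Real.log (q y / p y) := by
        rw [← Real.log_inv, inv_div]
      constructor
      · have h1 := Real.log_le_sub_one_of_pos (div_pos (hq y) hp')
        have h2 : p y * Real.log (q y / p y) ≤ q y - p y := by
          nlinarith
        simp only [hg, hlogeq]
        nlinarith
      · constructor
        · intro h
          by_contra hne
          have hne' : q y / p y ≠ 1 := by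
            intro hh
            rw [div_eq_one_iff_eq (ne_of_gt hp')] at hh
            exact hne hh.symm
          have h1 := Real.log_lt_sub_one_of_pos (div_pos (hq y) hp') hne'
          have h2 : p y * Real.log (q y / p y) < q y - p y := by
            nlinarith
          simp only [hg, hlogeq] at h
          nlinarith
        · intro h
          simp [hg, h, div_self (hq y).ne', Real.log_one]
  have hsum : ∑ y, g y = ∑ y, p y * Real.log (p y / q y) := by
    simp only [hg]
    rw [Finset.sum_add_distrib, Finset.sum_sub_distrib, hps, hqs]
    ring
  have hnn : 0 ≤ ∑ y, g y := Finset.sum_nonneg (fun y _ => (hkey y).1)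
  constructor
  · rw [← hsum]; exact hnn
  · rw [← hsum]
    constructor
    · intro h
      funext y
      have := (Finset.sum_eq_zero_iff_of_nonneg
        (fun y _ => (hkey y).1)).mp h y (Finset.mem_univ y)
      exact ((hkey y).2).mp this
    · intro h
      rw [Finset.sum_eq_zero]
      intro y _
      exact ((hkey y).2).mpr (congrFun h y)

theorem stmt_3 {Y : Type*} [Fintype Y] [Nonempty Y]
    (π₀ : Y → ℝ) (hπ₀pos : ∀ y, 0 < π₀ y) (hπ₀sum : ∑ y, π₀ y = 1)
    (r : Y → ℝ) (β : ℝ) (hβ : 0 < β)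
    (w : Y → Y → ℝ)
    (hw : ∀ y z, w y z =
      (if r z < r y then (1 : ℝ) else 0) + (if r y = r z then 1 / 2 else 0))
    (C : Y → ℝ) (hC : ∀ y, C y = ∑ z, π₀ z * w y z)
    (πstar : Y → ℝ)
    (hπstar : ∀ y, πstar y =
      π₀ y * Real.exp (C y / β) / ∑ z, π₀ z * Real.exp (C z / β)) :
    ∀ π : Y → ℝ, (∀ y, 0 ≤ π y) → (∑ y, π y = 1) →
      ((∑ y, ∑ z, w y z * π y * π₀ z) - β * (∑ y, π y * Real.log (π y / π₀ y))
          ≤ (∑ y, ∑ z, w y z * πstar y * π₀ z)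
              - β * (∑ y, πstar y * Real.log (πstar y / π₀ y))
        ∧ ((∑ y, ∑ z, w y z * π y * π₀ z) - β * (∑ y, π y * Real.log (π y / π₀ y))
            = (∑ y, ∑ z, w y z * πstar y * π₀ z)
                - β * (∑ y, πstar y * Real.log (πstar y / π₀ y))
          ↔ π = πstar)) := by
  set Z : ℝ := ∑ z, π₀ z * Real.exp (C z / β) with hZ
  have hZpos : 0 < Z :=
    Finset.sum_pos (fun z _ => mul_pos (hπ₀pos z) (Real.exp_pos _))
      Finset.univ_nonempty
  have hstarpos : ∀ y, 0 < πstar y := by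
    intro y
    rw [hπstar]
    exact div_pos (mul_pos (hπ₀pos y) (Real.exp_pos _)) hZpos
  have hstarsum : ∑ y, πstar y = 1 := by
    simp only [hπstar]
    rw [← Finset.sum_div, ← hZ, div_self hZpos.ne']
  have hlogstar : ∀ y, Real.log (πstar y / π₀ y) = C y / β - Real.log Z := by
    intro y
    have h1 : πstar y / π₀ y = Real.exp (C y / β) / Z := by
      rw [hπstar]
      field_simp [(hπ₀pos y).ne', hZpos.ne']
    rw [h1, Real.log_div (Real.exp_ne_zero _) hZpos.ne', Real.log_exp]
  -- key reduction
  have key : ∀ π : Y → ℝ, (∀ y, 0 ≤ π y) → (∑ y, π y = 1) →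
      (∑ y, ∑ z, w y z * π y * π₀ z) - β * (∑ y, π y * Real.log (π y / π₀ y))
        = β * Real.log Z - β * ∑ y, π y * Real.log (π y / πstar y) := by
    intro π hπ hπs
    have h1 : (∑ y, ∑ z, w y z * π y * π₀ z) = ∑ y, π y * C y := by
      apply Finset.sum_congr rfl
      intro y _
      rw [hC, Finset.mul_sum]
      apply Finset.sum_congr rfl
      intro z _
      ring
    have h2 : ∀ y, π y * Real.log (π y / π₀ y)
        = π y * Real.log (π y / πstar y) + π y * (C y / β - Real.log Z) := by
      intro y
      by_cases hpy : π y = 0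
      · simp [hpy]
      · have hp' : 0 < π y := lt_of_le_of_ne (hπ y) (Ne.symm hpy)
        have heq : π y / π₀ y = (π y / πstar y) * (πstar y / π₀ y) := by
          field_simp [(hstarpos y).ne', (hπ₀pos y).ne']
        rw [heq, Real.log_mul (div_pos hp' (hstarpos y)).ne'
          (div_pos (hstarpos y) (hπ₀pos y)).ne', hlogstar y]
        ring
    have h3 : ∑ y, π y * Real.log (π y / π₀ y)
        = (∑ y, π y * Real.log (π y / πstar y))
          + ((∑ y, π y * C y) / β - Real.log Z) := by
      rw [Finset.sum_congr rfl (fun y _ => h2 y), Finset.sum_add_distrib]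
      congr 1
      have : ∀ y, π y * (C y / β - Real.log Z)
          = π y * C y / β - Real.log Z * π y := by intro y; ring
      rw [Finset.sum_congr rfl (fun y _ => this y), Finset.sum_sub_distrib,
        ← Finset.sum_div, ← Finset.mul_sum, hπs, mul_one]
    rw [h1, h3]
    field_simp
    ring
  intro π hπ hπs
  have hkπ := key π hπ hπs
  have hkstar := key πstar (fun y => (hstarpos y).le) hstarsum
  have hDstar : ∑ y, πstar y * Real.log (πstar y / πstar y) = 0 := by
    apply Finset.sum_eq_zero
    intro y _
    rw [div_self (hstarpos y).ne', Real.log_one, mul_zero]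
  rw [hDstar, mul_zero, sub_zero] at hkstar
  obtain ⟨hD0, hDeq⟩ := gibbs_aux π πstar hπ hstarpos hπs hstarsum
  constructor
  · rw [hkπ, hkstar]
    nlinarith
  · rw [hkπ, hkstar]
    constructor
    · intro h
      apply hDeq.mp
      have : β * ∑ y, π y * Real.log (π y / πstar y) = 0 := by linarith
      exact (mul_eq_zero.mp this).resolve_left hβ.ne'
    · intro h
      rw [h, hDstar, mul_zero, sub_zero]
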